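/- Let H be a connected finite simple graph of girth g(H) ≥ 5 and minimum degree δ(H) ≥ 3, and let k be an integer with 1 ≤ k ≤ C(K_1 + H). Then adim_k(K_1 + H) = adim_k(H). -/

import Mathlib

open Finset

namespace AdjDim

noncomputable section
open Classical

variable {V W : Type*}

/-- Truncated distance `d_{G,2}(x,y) = min(d_G(x,y), 2)`:
`0` if `x = y`, `1` if `x` and `y` are adjacent, and `2` otherwise. -/
def d2 (G : SimpleGraph V) (x y : V) : ℕ :=
  if x = y then 0 else if G.Adj x y then 1 else 2

/-- `S` is a `k`-adjacency generator for `G`: every pair of distinct vertices is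
distinguished (w.r.t. `d_{G,2}`) by at least `k` vertices of `S`. -/
def IsKAdjGen (G : SimpleGraph V) [Fintype V] (k : ℕ) (S : Finset V) : Prop :=
  ∀ x y : V, x ≠ y → k ≤ (S.filter (fun w => d2 G x w ≠ d2 G y w)).card

/-- The `k`-adjacency dimension of `G`: the minimum cardinality of a
`k`-adjacency generator. -/
def adim (G : SimpleGraph V) [Fintype V] (k : ℕ) : ℕ :=
  sInf {n | ∃ S : Finset V, IsKAdjGen G k S ∧ S.card = n}

/-- `B` is a `k`-adjacency basis of `G`: a `k`-adjacency generator of minimum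
cardinality. -/
def IsKAdjBasis (G : SimpleGraph V) [Fintype V] (k : ℕ) (B : Finset V) : Prop :=
  IsKAdjGen G k B ∧ B.card = adim G k

/-- `G` is `k`-adjacency dimensional: `k` is the largest integer for which a
`k`-adjacency generator exists. -/
def IsKAdjDimensional (G : SimpleGraph V) [Fintype V] (k : ℕ) : Prop :=
  (∃ S : Finset V, IsKAdjGen G k S) ∧
    ∀ k' : ℕ, k < k' → ¬ ∃ S : Finset V, IsKAdjGen G k' S

/-- `C_G(x,y)`: the set of vertices distinguishing `x` and `y` w.r.t. `d_{G,2}`. -/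
def CSet (G : SimpleGraph V) [Fintype V] (x y : V) : Finset V :=
  univ.filter (fun z => d2 G x z ≠ d2 G y z)

/-- `C(G) = min_{x ≠ y} |C_G(x,y)|`. -/
def Cmin (G : SimpleGraph V) [Fintype V] : ℕ :=
  sInf {m | ∃ x y : V, x ≠ y ∧ (CSet G x y).card = m}

/-- `C_k(G)`: the union of the sets `C_G(x,y)` over pairs of distinct vertices
with `|C_G(x,y)| = k`. -/
def Ck (G : SimpleGraph V) [Fintype V] (k : ℕ) : Finset V :=
  univ.filter (fun z => ∃ x y : V, x ≠ y ∧ (CSet G x y).card = k ∧ z ∈ CSet G x y)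

/-- Two distinct vertices `x, y` are twins: every other vertex is at the same
truncated distance from both. -/
def Twins (G : SimpleGraph V) (x y : V) : Prop :=
  x ≠ y ∧ ∀ z : V, z ≠ x → z ≠ y → d2 G x z = d2 G y z

/-- The join `G + H` of two vertex-disjoint graphs. -/
def join (G : SimpleGraph V) (H : SimpleGraph W) : SimpleGraph (V ⊕ W) where
  Adj x y :=
    match x, y with
    | Sum.inl a, Sum.inl b => G.Adj a b
    | Sum.inr a, Sum.inr b => H.Adj a b
    | Sum.inl _, Sum.inr _ => True
    | Sum.inr _, Sum.inl _ => True
  symm := by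
    constructor
    rintro (a | a) (b | b) h
    · exact G.adj_symm h
    · trivial
    · trivial
    · exact H.adj_symm h
  loopless := by
    constructor
    rintro (a | a) h
    · exact G.irrefl h
    · exact H.irrefl h

/-- `K_1 + H`: the join of a one-vertex graph with `H`, i.e. `H` together with a
new universal vertex. -/
def K1join (H : SimpleGraph W) : SimpleGraph (Unit ⊕ W) :=
  join (⊥ : SimpleGraph Unit) H


/-! ### Auxiliary lemmas -/

lemma girth_le_cycle {α : Type*} {G : SimpleGraph α} {a : α} {w : G.Walk a a}
    (hw : w.IsCycle) : G.girth ≤ w.length := by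
  have h1 : G.egirth ≤ w.length :=
    le_trans (iInf_le _ a) (le_trans (iInf_le _ w) (iInf_le _ hw))
  calc G.girth = G.egirth.toNat := rfl
    _ ≤ ((w.length : ℕ∞)).toNat := ENat.toNat_le_toNat h1 (by simp)
    _ = w.length := by simp

lemma noTriangle {α : Type*} {G : SimpleGraph α} {a b c : α} (hg : 5 ≤ G.girth)
    (hab : G.Adj a b) (hbc : G.Adj b c) (hac : G.Adj a c) : False := by
  have hcyc : (SimpleGraph.Walk.cons hab (SimpleGraph.Walk.cons hbc
      (SimpleGraph.Walk.cons hac.symm SimpleGraph.Walk.nil))).IsCycle := by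
    simp [SimpleGraph.Walk.isCycle_def, SimpleGraph.Walk.isTrail_def, hab.ne, hbc.ne, hac.ne,
      hab.ne', hbc.ne', hac.ne', Sym2.eq, Sym2.rel_iff]
  have := girth_le_cycle hcyc
  simp only [SimpleGraph.Walk.length_cons, SimpleGraph.Walk.length_nil] at this
  omega

lemma noSquare {α : Type*} {G : SimpleGraph α} {a b c d : α} (hg : 5 ≤ G.girth)
    (hab : G.Adj a b) (hbc : G.Adj b c) (hcd : G.Adj c d) (had : G.Adj a d)
    (hac : a ≠ c) (hbd : b ≠ d) : False := by
  have hcyc : (SimpleGraph.Walk.cons hab (SimpleGraph.Walk.cons hbc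
      (SimpleGraph.Walk.cons hcd (SimpleGraph.Walk.cons had.symm
        SimpleGraph.Walk.nil)))).IsCycle := by
    simp [SimpleGraph.Walk.isCycle_def, SimpleGraph.Walk.isTrail_def, hab.ne, hbc.ne, hcd.ne,
      had.ne, hab.ne', hbc.ne', hcd.ne', had.ne', Sym2.eq, Sym2.rel_iff, hac, hbd, hac.symm,
      hbd.symm]
  have := girth_le_cycle hcyc
  simp only [SimpleGraph.Walk.length_cons, SimpleGraph.Walk.length_nil] at this
  omega

lemma d2_self' (G : SimpleGraph V) (x : V) : d2 G x x = 0 := by simp [d2]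

lemma d2_adj {G : SimpleGraph V} {x z : V} (h : G.Adj x z) : d2 G x z = 1 := by
  rw [d2, if_neg h.ne, if_pos h]

lemma d2_two {G : SimpleGraph V} {x z : V} (h1 : x ≠ z) (h2 : ¬ G.Adj x z) :
    d2 G x z = 2 := by
  rw [d2, if_neg h1, if_neg h2]

/-- The combinatorial heart: for a graph of girth at least `5` and minimum degree
at least `3`, every `k`-adjacency generator contains, for every vertex `y`, at
least `k` vertices at truncated distance different from `1` to `y`. -/
lemma core [Fintype W] (H : SimpleGraph W) [DecidableRel H.Adj] (hg : 5 ≤ H.girth)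
    (hdeg : ∀ v : W, 3 ≤ H.degree v) {k : ℕ} (hk1 : 1 ≤ k) {B : Finset W}
    (hB : IsKAdjGen H k B) (y : W) :
    k ≤ (B.filter (fun z => d2 H y z ≠ 1)).card := by
  by_contra hcon
  push_neg at hcon
  set F := B.filter (fun z => d2 H y z ≠ 1) with hF
  set M := B.filter (fun z => ¬ H.Adj y z ∧ z ≠ y) with hM
  set E := B.filter (fun z => z = y) with hE
  have hMF : M ∪ E ⊆ F := by
    intro z hz
    rw [Finset.mem_union, hM, hE, Finset.mem_filter, Finset.mem_filter] at hz
    rw [hF, Finset.mem_filter]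
    rcases hz with ⟨hzB, hna, hzy⟩ | ⟨hzB, hzy⟩
    · exact ⟨hzB, by rw [d2_two (Ne.symm hzy) hna]; omega⟩
    · exact ⟨hzB, by rw [hzy, d2_self']; omega⟩
  have hdisj : Disjoint M E := by
    rw [Finset.disjoint_left]
    intro z hz hz'
    rw [hM, Finset.mem_filter] at hz
    rw [hE, Finset.mem_filter] at hz'
    exact hz.2.2 hz'.2
  have hbud : M.card + E.card + 1 ≤ k := by
    have := Finset.card_union_of_disjoint hdisj ▸ Finset.card_le_card hMF
    omega
  -- the engine: distinguishing sets of pairs (u, v) with u ~ y, v ~ u, v ≠ y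
  have engine : ∀ u v : W, H.Adj y u → H.Adj u v → v ≠ y →
      ∀ z ∈ M, H.Adj u z ∨ H.Adj v z := by
    intro u v hyu huv hvy
    have hvNy : ¬ H.Adj y v := fun h => noTriangle hg hyu huv h
    have hsub : B.filter (fun z => d2 H u z ≠ d2 H v z) ⊆
        E ∪ insert u (M.filter (fun z => H.Adj u z ∨ H.Adj v z)) := by
      intro z hz
      rw [Finset.mem_filter] at hz
      obtain ⟨hzB, hzd⟩ := hz
      by_cases hzy : z = y
      · exact Finset.mem_union_left _ (Finset.mem_filter.mpr ⟨hzB, hzy⟩)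
      by_cases hzu : z = u
      · exact Finset.mem_union_right _ (Finset.mem_insert.mpr (Or.inl hzu))
      by_cases hyz : H.Adj y z
      · exfalso
        have h1 : ¬ H.Adj u z := fun h => noTriangle hg hyu h hyz
        have h2 : z ≠ v := fun h => hvNy (h ▸ hyz)
        have h3 : ¬ H.Adj v z := fun h =>
          noSquare hg hyu huv h hyz (fun h' => hvy h'.symm) (fun h' => hzu h'.symm)
        exact hzd (by rw [d2_two (fun h => hzu h.symm) h1,
          d2_two (fun h => h2 h.symm) h3])
      · refine Finset.mem_union_right _ (Finset.mem_insert.mpr (Or.inr ?_))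
        rw [Finset.mem_filter]
        refine ⟨Finset.mem_filter.mpr ⟨hzB, hyz, hzy⟩, ?_⟩
        by_cases hzv : z = v
        · exact Or.inl (hzv ▸ huv)
        · by_contra hno
          push_neg at hno
          exact hzd (by rw [d2_two (fun h => hzu h.symm) hno.1,
            d2_two (fun h => hzv h.symm) hno.2])
    have hk' := hB u v huv.ne
    have hcard : k ≤ E.card + (1 + (M.filter (fun z => H.Adj u z ∨ H.Adj v z)).card) := by
      calc k ≤ (B.filter (fun z => d2 H u z ≠ d2 H v z)).card := hk'
        _ ≤ (E ∪ insert u (M.filter (fun z => H.Adj u z ∨ H.Adj v z))).card :=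
            Finset.card_le_card hsub
        _ ≤ E.card + (insert u (M.filter (fun z => H.Adj u z ∨ H.Adj v z))).card :=
            Finset.card_union_le _ _
        _ ≤ E.card + (1 + (M.filter (fun z => H.Adj u z ∨ H.Adj v z)).card) := by
            have := Finset.card_insert_le u (M.filter (fun z => H.Adj u z ∨ H.Adj v z))
            omega
    have hMle : M.card ≤ (M.filter (fun z => H.Adj u z ∨ H.Adj v z)).card := by omega
    have heq := Finset.eq_of_subset_of_card_le (Finset.filter_subset _ M) hMle
    intro z hz
    rw [← heq] at hz
    exact (Finset.mem_filter.mp hz).2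
  -- every vertex has two distinct neighbors different from y
  have twoNbrs : ∀ u : W, ∃ v v' : W, H.Adj u v ∧ v ≠ y ∧ H.Adj u v' ∧ v' ≠ y ∧ v ≠ v' := by
    intro u
    have h3 : 3 ≤ (H.neighborFinset u).card := hdeg u
    have h2 : 1 < ((H.neighborFinset u).erase y).card := by
      have := Finset.pred_card_le_card_erase (a := y) (s := H.neighborFinset u)
      omega
    obtain ⟨v, hv, v', hv', hvv'⟩ := Finset.one_lt_card.mp h2
    rw [Finset.mem_erase, SimpleGraph.mem_neighborFinset] at hv hv'
    exact ⟨v, v', hv.2, hv.1, hv'.2, hv'.1, hvv'⟩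
  -- every element of M is adjacent to every neighbor of y
  have step2 : ∀ u : W, H.Adj y u → ∀ z ∈ M, H.Adj u z := by
    intro u hyu z hz
    obtain ⟨v, v', huv, hvy, huv', hvy', hvv'⟩ := twoNbrs u
    have hzu : z ≠ u := by
      rw [hM, Finset.mem_filter] at hz
      exact fun h => hz.2.1 (h ▸ hyu)
    rcases engine u v hyu huv hvy z hz with h | h1
    · exact h
    rcases engine u v' hyu huv' hvy' z hz with h | h2
    · exact h
    exact absurd rfl (fun _ : (1:ℕ) = 1 =>
      noSquare hg huv h1 h2.symm huv' (fun h => hzu h.symm) hvv')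
  -- M is empty
  have hMempty : ∀ z : W, z ∉ M := by
    intro z hz
    have h3 : 1 < (H.neighborFinset y).card := by
      rw [SimpleGraph.card_neighborFinset_eq_degree]; have := hdeg y; omega
    obtain ⟨u, hu, u', hu', huu'⟩ := Finset.one_lt_card.mp h3
    rw [SimpleGraph.mem_neighborFinset] at hu hu'
    have hzy : z ≠ y := (Finset.mem_filter.mp hz).2.2
    exact noSquare hg hu (step2 u hu z hz) (step2 u' hu' z hz).symm hu'
      (fun h => hzy h.symm) huu'
  have hBsub : ∀ z ∈ B, z = y ∨ H.Adj y z := by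
    intro z hzB
    by_contra hno
    push_neg at hno
    exact hMempty z (Finset.mem_filter.mpr ⟨hzB, hno.2, hno.1⟩)
  -- final contradiction
  have h3 : 0 < (H.neighborFinset y).card := by
    rw [SimpleGraph.card_neighborFinset_eq_degree]; have := hdeg y; omega
  obtain ⟨u, hu⟩ := Finset.card_pos.mp h3
  rw [SimpleGraph.mem_neighborFinset] at hu
  obtain ⟨v, v', huv, hvy, huv', hvy', hvv'⟩ := twoNbrs u
  have hvNy : ¬ H.Adj y v := fun h => noTriangle hg hu huv h
  have hvNy' : ¬ H.Adj y v' := fun h => noTriangle hg hu huv' h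
  have hfilt : B.filter (fun z => d2 H v z ≠ d2 H v' z) = ∅ := by
    rw [Finset.eq_empty_iff_forall_notMem]
    intro z hz
    rw [Finset.mem_filter] at hz
    obtain ⟨hzB, hzd⟩ := hz
    rcases hBsub z hzB with hzy | hyz
    · subst hzy
      exact hzd (by rw [d2_two hvy (fun h => hvNy h.symm),
        d2_two hvy' (fun h => hvNy' h.symm)])
    · by_cases hzu : z = u
      · subst hzu
        exact hzd (by rw [d2_adj huv.symm, d2_adj huv'.symm])
      · have h1 : ¬ H.Adj z v := fun h =>
          noSquare hg hyz h huv.symm hu (fun h' => hvy h'.symm) hzu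
        have h2 : ¬ H.Adj z v' := fun h =>
          noSquare hg hyz h huv'.symm hu (fun h' => hvy' h'.symm) hzu
        have h1' : z ≠ v := fun h => hvNy (h ▸ hyz)
        have h2' : z ≠ v' := fun h => hvNy' (h ▸ hyz)
        exact hzd (by rw [d2_two (fun h => h1' h.symm) (fun h => h1 h.symm),
          d2_two (fun h => h2' h.symm) (fun h => h2 h.symm)])
  have := hB v v' hvv'
  rw [hfilt] at this
  simp at this
  omega

lemma K1_adj_inr_inr (H : SimpleGraph W) (a b : W) :
    (K1join H).Adj (Sum.inr a) (Sum.inr b) ↔ H.Adj a b := Iff.rfl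

lemma d2_K1_inr_inr (H : SimpleGraph W) (a b : W) :
    d2 (K1join H) (Sum.inr a) (Sum.inr b) = d2 H a b := by
  by_cases h : a = b
  · subst h; simp [d2]
  · have h2 : (Sum.inr a : Unit ⊕ W) ≠ Sum.inr b := by simp [h]
    by_cases hadj : H.Adj a b
    · rw [d2, d2, if_neg h2, if_neg h, if_pos hadj, if_pos ((K1_adj_inr_inr H a b).mpr hadj)]
    · rw [d2, d2, if_neg h2, if_neg h, if_neg hadj,
        if_neg (fun h' => hadj ((K1_adj_inr_inr H a b).mp h'))]

lemma d2_K1_inr_inl (H : SimpleGraph W) (u : Unit) (b : W) :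
    d2 (K1join H) (Sum.inr b) (Sum.inl u) = 1 := by
  have : (K1join H).Adj (Sum.inr b) (Sum.inl u) := trivial
  rw [d2, if_neg (by simp), if_pos this]

lemma d2_K1_inl_inr (H : SimpleGraph W) (u : Unit) (b : W) :
    d2 (K1join H) (Sum.inl u) (Sum.inr b) = 1 := by
  have : (K1join H).Adj (Sum.inl u) (Sum.inr b) := trivial
  rw [d2, if_neg (by simp), if_pos this]

lemma filter_pair_eq [Fintype W] (H : SimpleGraph W) (S : Finset (Unit ⊕ W)) (x y : W) :
    S.filter (fun w => d2 (K1join H) (Sum.inr x) w ≠ d2 (K1join H) (Sum.inr y) w) =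
      ((univ.filter (fun z : W => (Sum.inr z : Unit ⊕ W) ∈ S)).filter
        (fun z => d2 H x z ≠ d2 H y z)).image Sum.inr := by
  ext w
  rcases w with u | z
  · simp [d2_K1_inr_inl]
  · simp [d2_K1_inr_inr, Finset.mem_filter, Finset.mem_image]

lemma proj_gen [Fintype W] (H : SimpleGraph W) {k : ℕ} {S : Finset (Unit ⊕ W)}
    (hS : IsKAdjGen (K1join H) k S) :
    IsKAdjGen H k (univ.filter (fun z : W => (Sum.inr z : Unit ⊕ W) ∈ S)) := by
  intro x y hxy
  have h := hS (Sum.inr x) (Sum.inr y) (by simp [hxy])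
  rw [filter_pair_eq] at h
  rwa [Finset.card_image_of_injective _ Sum.inr_injective] at h

lemma proj_card [Fintype W] (S : Finset (Unit ⊕ W)) :
    (univ.filter (fun z : W => (Sum.inr z : Unit ⊕ W) ∈ S)).card ≤ S.card := by
  have h := Finset.card_image_of_injective
    (s := univ.filter (fun z : W => (Sum.inr z : Unit ⊕ W) ∈ S))
    (f := (Sum.inr : W → Unit ⊕ W)) Sum.inr_injective
  rw [← h]
  apply Finset.card_le_card
  intro w hw
  simp only [Finset.mem_image] at hw
  obtain ⟨z, hz, rfl⟩ := hw
  exact (Finset.mem_filter.mp hz).2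

lemma lift_gen [Fintype W] (H : SimpleGraph W) {k : ℕ} {B : Finset W}
    (hB : IsKAdjGen H k B)
    (hy : ∀ y : W, k ≤ (B.filter (fun z => d2 H y z ≠ 1)).card) :
    IsKAdjGen (K1join H) k (B.image Sum.inr) := by
  rintro (u | x) (u' | y) hxy
  · exact absurd (congrArg Sum.inl (Subsingleton.elim u u')) hxy
  · have hsub : (B.filter (fun z => d2 H y z ≠ 1)).image Sum.inr ⊆
        (B.image Sum.inr).filter
          (fun w => d2 (K1join H) (Sum.inl u) w ≠ d2 (K1join H) (Sum.inr y) w) := by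
      intro w hw
      simp only [Finset.mem_image] at hw
      obtain ⟨z, hz, rfl⟩ := hw
      rw [Finset.mem_filter] at hz
      rw [Finset.mem_filter]
      exact ⟨Finset.mem_image_of_mem _ hz.1,
        by rw [d2_K1_inl_inr, d2_K1_inr_inr]; exact fun h => hz.2 h.symm⟩
    calc k ≤ (B.filter (fun z => d2 H y z ≠ 1)).card := hy y
      _ = ((B.filter (fun z => d2 H y z ≠ 1)).image Sum.inr).card :=
          (Finset.card_image_of_injective _ Sum.inr_injective).symm
      _ ≤ _ := Finset.card_le_card hsub
  · have hsub : (B.filter (fun z => d2 H x z ≠ 1)).image Sum.inr ⊆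
        (B.image Sum.inr).filter
          (fun w => d2 (K1join H) (Sum.inr x) w ≠ d2 (K1join H) (Sum.inl u') w) := by
      intro w hw
      simp only [Finset.mem_image] at hw
      obtain ⟨z, hz, rfl⟩ := hw
      rw [Finset.mem_filter] at hz
      rw [Finset.mem_filter]
      exact ⟨Finset.mem_image_of_mem _ hz.1,
        by rw [d2_K1_inr_inr, d2_K1_inl_inr]; exact hz.2⟩
    calc k ≤ (B.filter (fun z => d2 H x z ≠ 1)).card := hy x
      _ = ((B.filter (fun z => d2 H x z ≠ 1)).image Sum.inr).card :=
          (Finset.card_image_of_injective _ Sum.inr_injective).symm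
      _ ≤ _ := Finset.card_le_card hsub
  · have hxy' : x ≠ y := fun h => hxy (by rw [h])
    have hsub : (B.filter (fun z => d2 H x z ≠ d2 H y z)).image Sum.inr ⊆
        (B.image Sum.inr).filter
          (fun w => d2 (K1join H) (Sum.inr x) w ≠ d2 (K1join H) (Sum.inr y) w) := by
      intro w hw
      simp only [Finset.mem_image] at hw
      obtain ⟨z, hz, rfl⟩ := hw
      rw [Finset.mem_filter] at hz
      rw [Finset.mem_filter]
      exact ⟨Finset.mem_image_of_mem _ hz.1,
        by rw [d2_K1_inr_inr, d2_K1_inr_inr]; exact hz.2⟩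
    calc k ≤ (B.filter (fun z => d2 H x z ≠ d2 H y z)).card := hB x y hxy'
      _ = ((B.filter (fun z => d2 H x z ≠ d2 H y z)).image Sum.inr).card :=
          (Finset.card_image_of_injective _ Sum.inr_injective).symm
      _ ≤ _ := Finset.card_le_card hsub


/-- Corollary 4.5: for a connected graph `H` of girth at least `5` and minimum
degree at least `3`, and `1 ≤ k ≤ C(K₁ + H)`, `adim_k(K₁ + H) = adim_k(H)`. -/
theorem adim_K1join_eq_of_girth [Fintype W] (H : SimpleGraph W)
    [DecidableRel H.Adj] (hconn : H.Connected) (hgirth : 5 ≤ H.girth)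
    (hdeg : ∀ v : W, 3 ≤ H.degree v) (k : ℕ)
    (hk1 : 1 ≤ k) (hk2 : k ≤ Cmin (K1join H)) :
    adim (K1join H) k = adim H k := by
  -- `univ` is a `k`-adjacency generator of `K₁ + H`, thanks to `hk2`
  have huniv : IsKAdjGen (K1join H) k (univ : Finset (Unit ⊕ W)) := by
    intro x y hxy
    have hmem : (CSet (K1join H) x y).card ∈
        {m | ∃ a b : Unit ⊕ W, a ≠ b ∧ (CSet (K1join H) a b).card = m} := ⟨x, y, hxy, rfl⟩
    exact le_trans hk2 (Nat.sInf_le hmem)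
  have hAK : {n | ∃ S : Finset (Unit ⊕ W), IsKAdjGen (K1join H) k S ∧ S.card = n}.Nonempty :=
    ⟨_, univ, huniv, rfl⟩
  obtain ⟨S, hSgen, hScard⟩ := Nat.sInf_mem hAK
  have hTgen := proj_gen H hSgen
  have hTcard := proj_card (W := W) S
  have hAH : {n | ∃ B : Finset W, IsKAdjGen H k B ∧ B.card = n}.Nonempty :=
    ⟨_, _, hTgen, rfl⟩
  obtain ⟨B, hBgen, hBcard⟩ := Nat.sInf_mem hAH
  have h1 : adim H k ≤ adim (K1join H) k := by
    calc adim H k ≤ (univ.filter (fun z : W => (Sum.inr z : Unit ⊕ W) ∈ S)).card :=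
          Nat.sInf_le ⟨_, hTgen, rfl⟩
      _ ≤ S.card := hTcard
      _ = adim (K1join H) k := hScard
  have h2 : adim (K1join H) k ≤ adim H k := by
    have hlift := lift_gen H hBgen (fun y => core H hgirth hdeg hk1 hBgen y)
    calc adim (K1join H) k ≤ (B.image Sum.inr).card := Nat.sInf_le ⟨_, hlift, rfl⟩
      _ = B.card := Finset.card_image_of_injective _ Sum.inr_injective
      _ = adim H k := hBcard
  omega


end
end AdjDim
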